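/- In the setting of Problem 1, let (p, p*) ∈ gra M and q ∈ 𝗫. Then every zero z of the saddle operator S satisfies ⟨z − p, p* + Cq⟩ ≤ (4α)⁻¹‖p − q‖², where α = min{α_i^c, β_k^c, δ_k^c : i∈I, k∈K}. -/

import Mathlib

/-!
Statement 8: In the setting of Problem 1, if `(p, p*) ∈ gra M` and `q ∈ 𝗫`, then every
zero `z` of the saddle operator `S` satisfies
`⟪z − p, p* + 𝗖q⟫ ≤ (4α)⁻¹ ‖p − q‖²`, where `α = min {αᵢᶜ, βₖᶜ, δₖᶜ}`.
-/

open scoped RealInnerProductSpace Pointwise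
open Filter Topology

noncomputable section

/-- A set-valued operator is monotone. -/
def IsMonotoneOp {E : Type*} [NormedAddCommGroup E] [InnerProductSpace ℝ E]
    (A : E → Set E) : Prop :=
  ∀ ⦃x x' y y'⦄, x' ∈ A x → y' ∈ A y → (0:ℝ) ≤ ⟪x - y, x' - y'⟫

/-- A set-valued operator is maximally monotone. -/
def IsMaxMonotoneOp {E : Type*} [NormedAddCommGroup E] [InnerProductSpace ℝ E]
    (A : E → Set E) : Prop :=
  IsMonotoneOp A ∧
    ∀ x x', (∀ y y', y' ∈ A y → (0:ℝ) ≤ ⟪x - y, x' - y'⟫) → x' ∈ A x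

/-- A single-valued operator is monotone. -/
def IsMonotoneMap {E : Type*} [NormedAddCommGroup E] [InnerProductSpace ℝ E]
    (f : E → E) : Prop :=
  ∀ x y, (0:ℝ) ≤ ⟪x - y, f x - f y⟫

/-- `f` is Lipschitz continuous with constant `c`. -/
def IsLipschitzMap {E F : Type*} [NormedAddCommGroup E] [NormedAddCommGroup F]
    (f : E → F) (c : ℝ) : Prop :=
  ∀ x y, ‖f x - f y‖ ≤ c * ‖x - y‖

/-- `f` is cocoercive with constant `α`. -/
def IsCocoercive {E : Type*} [NormedAddCommGroup E] [InnerProductSpace ℝ E]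
    (f : E → E) (α : ℝ) : Prop :=
  ∀ x y, α * ‖f x - f y‖ ^ 2 ≤ ⟪x - y, f x - f y⟫

universe u

variable {I K : Type*}

/-- The family of component spaces of `𝗫 = 𝗛 ⊕ 𝗚 ⊕ 𝗚 ⊕ 𝗚`. -/
def XFam (H : I → Type u) (G : K → Type u) : I ⊕ K ⊕ K ⊕ K → Type u :=
  Sum.elim H (Sum.elim G (Sum.elim G G))

variable {H : I → Type u} {G : K → Type u}

instance [∀ i, NormedAddCommGroup (H i)] [∀ k, NormedAddCommGroup (G k)] :
    ∀ st, NormedAddCommGroup (XFam H G st)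
  | Sum.inl i => inferInstanceAs (NormedAddCommGroup (H i))
  | Sum.inr (Sum.inl k) => inferInstanceAs (NormedAddCommGroup (G k))
  | Sum.inr (Sum.inr (Sum.inl k)) => inferInstanceAs (NormedAddCommGroup (G k))
  | Sum.inr (Sum.inr (Sum.inr k)) => inferInstanceAs (NormedAddCommGroup (G k))

instance [∀ i, NormedAddCommGroup (H i)] [∀ k, NormedAddCommGroup (G k)]
    [∀ i, InnerProductSpace ℝ (H i)] [∀ k, InnerProductSpace ℝ (G k)] :
    ∀ st, InnerProductSpace ℝ (XFam H G st)
  | Sum.inl i => inferInstanceAs (InnerProductSpace ℝ (H i))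
  | Sum.inr (Sum.inl k) => inferInstanceAs (InnerProductSpace ℝ (G k))
  | Sum.inr (Sum.inr (Sum.inl k)) => inferInstanceAs (InnerProductSpace ℝ (G k))
  | Sum.inr (Sum.inr (Sum.inr k)) => inferInstanceAs (InnerProductSpace ℝ (G k))

def Xx (w : PiLp 2 (XFam H G)) [∀ i, NormedAddCommGroup (H i)]
    [∀ k, NormedAddCommGroup (G k)] : PiLp 2 H := WithLp.toLp 2 (fun i => w (Sum.inl i))

def Xy (w : PiLp 2 (XFam H G)) [∀ i, NormedAddCommGroup (H i)]
    [∀ k, NormedAddCommGroup (G k)] : PiLp 2 G := WithLp.toLp 2 (fun k => w (Sum.inr (Sum.inl k)))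

def Xz (w : PiLp 2 (XFam H G)) [∀ i, NormedAddCommGroup (H i)]
    [∀ k, NormedAddCommGroup (G k)] : PiLp 2 G := WithLp.toLp 2 (fun k => w (Sum.inr (Sum.inr (Sum.inl k))))

def Xv (w : PiLp 2 (XFam H G)) [∀ i, NormedAddCommGroup (H i)]
    [∀ k, NormedAddCommGroup (G k)] : PiLp 2 G := WithLp.toLp 2 (fun k => w (Sum.inr (Sum.inr (Sum.inr k))))

/-- The saddle operator `S` of Problem 1, acting on `𝗫 = 𝗛 ⊕ 𝗚 ⊕ 𝗚 ⊕ 𝗚`,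
realized as `PiLp 2 (XFam H G)`.  A point `w' = (a*, b*, c*, d)` belongs to `S w`,
`w = (x, y, z, v*)`, iff
`aᵢ* ∈ -sᵢ* + Aᵢxᵢ + Cᵢxᵢ + Qᵢxᵢ + Rᵢx + Σₖ Lₖᵢ* vₖ*`,
`bₖ* ∈ Bₖᵐyₖ + Bₖᶜyₖ + Bₖˡyₖ - vₖ*`, `cₖ* ∈ Dₖᵐzₖ + Dₖᶜzₖ + Dₖˡzₖ - vₖ*`, and
`dₖ = rₖ + yₖ + zₖ - Σᵢ Lₖᵢxᵢ`. -/
def SaddleOp [Fintype I] [Fintype K]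
    [∀ i, NormedAddCommGroup (H i)] [∀ i, InnerProductSpace ℝ (H i)]
    [∀ i, CompleteSpace (H i)]
    [∀ k, NormedAddCommGroup (G k)] [∀ k, InnerProductSpace ℝ (G k)]
    [∀ k, CompleteSpace (G k)]
    (s : ∀ i, H i) (r : ∀ k, G k)
    (A : ∀ i, H i → Set (H i)) (C Q : ∀ i, H i → H i) (R : ∀ i, PiLp 2 H → H i)
    (Bm : ∀ k, G k → Set (G k)) (Bc Bl : ∀ k, G k → G k)
    (Dm : ∀ k, G k → Set (G k)) (Dc Dl : ∀ k, G k → G k)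
    (L : ∀ k i, H i →L[ℝ] G k) :
    PiLp 2 (XFam H G) → Set (PiLp 2 (XFam H G)) := fun w =>
  {w' |
    (∀ i, Xx w' i + s i - C i (Xx w i) - Q i (Xx w i) - R i (Xx w)
        - ∑ k, ContinuousLinearMap.adjoint (L k i) (Xv w k) ∈ A i (Xx w i)) ∧
    (∀ k, Xy w' k - Bc k (Xy w k) - Bl k (Xy w k) + Xv w k ∈ Bm k (Xy w k)) ∧
    (∀ k, Xz w' k - Dc k (Xz w k) - Dl k (Xz w k) + Xv w k ∈ Dm k (Xz w k)) ∧
    (∀ k, Xv w' k = r k + Xy w k + Xz w k - ∑ i, L k i (Xx w i))}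

/-- Build a point of `𝗫` from its four components. -/
def mkX (x : PiLp 2 H) (y z v : PiLp 2 G) : PiLp 2 (XFam H G) := WithLp.toLp 2 (fun st =>
  match st with
  | Sum.inl i => x i
  | Sum.inr (Sum.inl k) => y k
  | Sum.inr (Sum.inr (Sum.inl k)) => z k
  | Sum.inr (Sum.inr (Sum.inr k)) => v k : ∀ st, XFam H G st)

/-- The cocoercive part `𝗖 : 𝗫 → 𝗫 : (x,y,z,v*) ↦ ((Cᵢxᵢ)ᵢ, (Bₖᶜyₖ)ₖ, (Dₖᶜzₖ)ₖ, 0)`. -/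
def CopX [∀ i, NormedAddCommGroup (H i)] [∀ k, NormedAddCommGroup (G k)]
    (C : ∀ i, H i → H i) (Bc Dc : ∀ k, G k → G k) :
    PiLp 2 (XFam H G) → PiLp 2 (XFam H G) := fun w =>
  mkX (WithLp.toLp 2 (fun i => C i (Xx w i))) (WithLp.toLp 2 (fun k => Bc k (Xy w k)))
    (WithLp.toLp 2 (fun k => Dc k (Xz w k))) 0

/-- The operator `𝗠`, i.e. the saddle operator with the cocoercive parts removed. -/
def Mop [Fintype I] [Fintype K]
    [∀ i, NormedAddCommGroup (H i)] [∀ i, InnerProductSpace ℝ (H i)]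
    [∀ i, CompleteSpace (H i)]
    [∀ k, NormedAddCommGroup (G k)] [∀ k, InnerProductSpace ℝ (G k)]
    [∀ k, CompleteSpace (G k)]
    (s : ∀ i, H i) (r : ∀ k, G k)
    (A : ∀ i, H i → Set (H i)) (Q : ∀ i, H i → H i) (R : ∀ i, PiLp 2 H → H i)
    (Bm : ∀ k, G k → Set (G k)) (Bl : ∀ k, G k → G k)
    (Dm : ∀ k, G k → Set (G k)) (Dl : ∀ k, G k → G k)
    (L : ∀ k i, H i →L[ℝ] G k) :
    PiLp 2 (XFam H G) → Set (PiLp 2 (XFam H G)) := fun w =>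
  {w' |
    (∀ i, Xx w' i + s i - Q i (Xx w i) - R i (Xx w)
        - ∑ k, ContinuousLinearMap.adjoint (L k i) (Xv w k) ∈ A i (Xx w i)) ∧
    (∀ k, Xy w' k - Bl k (Xy w k) + Xv w k ∈ Bm k (Xy w k)) ∧
    (∀ k, Xz w' k - Dl k (Xz w k) + Xv w k ∈ Dm k (Xz w k)) ∧
    (∀ k, Xv w' k = r k + Xy w k + Xz w k - ∑ i, L k i (Xx w i))}

/-- In the setting of Problem 1, let `(p, p*) ∈ gra 𝗠` and `q ∈ 𝗫`.
Then every zero `z` of the saddle operator `S` satisfies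
`⟪z − p, p* + 𝗖q⟫ ≤ (4α)⁻¹ ‖p − q‖²` with `α = min {αᵢᶜ, βₖᶜ, δₖᶜ}`. -/
theorem zer_saddleOp_subset_halfspace
    [Fintype I] [Fintype K] [Nonempty I] [Nonempty K]
    [∀ i, NormedAddCommGroup (H i)] [∀ i, InnerProductSpace ℝ (H i)]
    [∀ i, CompleteSpace (H i)]
    [∀ k, NormedAddCommGroup (G k)] [∀ k, InnerProductSpace ℝ (G k)]
    [∀ k, CompleteSpace (G k)]
    (s : ∀ i, H i) (r : ∀ k, G k)
    (A : ∀ i, H i → Set (H i)) (hA : ∀ i, IsMaxMonotoneOp (A i))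
    (C : ∀ i, H i → H i) (αc : I → ℝ) (hαc : ∀ i, 0 < αc i)
    (hC : ∀ i, IsCocoercive (C i) (αc i))
    (Q : ∀ i, H i → H i) (αl : I → ℝ) (hαl : ∀ i, 0 ≤ αl i)
    (hQm : ∀ i, IsMonotoneMap (Q i)) (hQl : ∀ i, IsLipschitzMap (Q i) (αl i))
    (R : ∀ i, PiLp 2 H → H i) (χ : ℝ) (hχ : 0 ≤ χ)
    (hRm : IsMonotoneMap (fun x : PiLp 2 H => (WithLp.toLp 2 (fun i => R i x) : PiLp 2 H)))
    (hRl : IsLipschitzMap (fun x : PiLp 2 H => (WithLp.toLp 2 (fun i => R i x) : PiLp 2 H)) χ)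
    (Bm : ∀ k, G k → Set (G k)) (hBm : ∀ k, IsMaxMonotoneOp (Bm k))
    (Bc : ∀ k, G k → G k) (βc : K → ℝ) (hβc : ∀ k, 0 < βc k)
    (hBc : ∀ k, IsCocoercive (Bc k) (βc k))
    (Bl : ∀ k, G k → G k) (βl : K → ℝ) (hβl : ∀ k, 0 ≤ βl k)
    (hBlm : ∀ k, IsMonotoneMap (Bl k)) (hBll : ∀ k, IsLipschitzMap (Bl k) (βl k))
    (Dm : ∀ k, G k → Set (G k)) (hDm : ∀ k, IsMaxMonotoneOp (Dm k))
    (Dc : ∀ k, G k → G k) (δc : K → ℝ) (hδc : ∀ k, 0 < δc k)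
    (hDc : ∀ k, IsCocoercive (Dc k) (δc k))
    (Dl : ∀ k, G k → G k) (δl : K → ℝ) (hδl : ∀ k, 0 ≤ δl k)
    (hDlm : ∀ k, IsMonotoneMap (Dl k)) (hDll : ∀ k, IsLipschitzMap (Dl k) (δl k))
    (L : ∀ k i, H i →L[ℝ] G k)
    (α : ℝ) (hα : α = min (⨅ i, αc i) (min (⨅ k, βc k) (⨅ k, δc k)))
    (p pstar q : PiLp 2 (XFam H G))
    (hp : pstar ∈ Mop s r A Q R Bm Bl Dm Dl L p) :
    ∀ z, 0 ∈ SaddleOp s r A C Q R Bm Bc Bl Dm Dc Dl L z →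
      ⟪z - p, pstar + CopX C Bc Dc q⟫ ≤ (4 * α)⁻¹ * ‖p - q‖ ^ 2 := by
  intro w hw
  obtain ⟨hw1, hw2, hw3, hw4⟩ := hw
  obtain ⟨hp1, hp2, hp3, hp4⟩ := hp
  -- bounds on α
  have hαa : ∀ i, α ≤ αc i := fun i =>
    hα ▸ le_trans (min_le_left _ _) (ciInf_le ((Set.finite_range αc).bddBelow) i)
  have hαb : ∀ k, α ≤ βc k := fun k =>
    hα ▸ le_trans (le_trans (min_le_right _ _) (min_le_left _ _))
      (ciInf_le ((Set.finite_range βc).bddBelow) k)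
  have hαd : ∀ k, α ≤ δc k := fun k =>
    hα ▸ le_trans (le_trans (min_le_right _ _) (min_le_right _ _))
      (ciInf_le ((Set.finite_range δc).bddBelow) k)
  have hα0 : 0 < α := by
    rw [hα]
    obtain ⟨i0, hi0⟩ := Finite.exists_min αc
    obtain ⟨k0, hk0⟩ := Finite.exists_min βc
    obtain ⟨k1, hk1⟩ := Finite.exists_min δc
    exact lt_min (lt_of_lt_of_le (hαc i0) (le_ciInf hi0))
      (lt_min (lt_of_lt_of_le (hβc k0) (le_ciInf hk0))
        (lt_of_lt_of_le (hδc k1) (le_ciInf hk1)))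
  -- decomposition of inner products and norms on 𝗫
  have dec : ∀ u v : PiLp 2 (XFam H G),
      ⟪u, v⟫ = ∑ i, ⟪Xx u i, Xx v i⟫ + (∑ k, ⟪Xy u k, Xy v k⟫
        + (∑ k, ⟪Xz u k, Xz v k⟫ + ∑ k, ⟪Xv u k, Xv v k⟫)) := by
    intro u v
    rw [PiLp.inner_apply, Fintype.sum_sum_type, Fintype.sum_sum_type, Fintype.sum_sum_type]
    rfl
  have decn : ∀ u : PiLp 2 (XFam H G),
      ‖u‖ ^ 2 = ∑ i, ‖Xx u i‖ ^ 2 + (∑ k, ‖Xy u k‖ ^ 2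
        + (∑ k, ‖Xz u k‖ ^ 2 + ∑ k, ‖Xv u k‖ ^ 2)) := by
    intro u
    rw [PiLp.norm_sq_eq_of_L2, Fintype.sum_sum_type, Fintype.sum_sum_type, Fintype.sum_sum_type]
    rfl
  -- per-component inequalities from monotonicity
  have key_i : ∀ i, ⟪Xx w i - Xx p i, Xx pstar i + C i (Xx w i)⟫
      + ⟪Xx w i - Xx p i, Q i (Xx w i) - Q i (Xx p i)⟫
      + ⟪Xx w i - Xx p i, R i (Xx w) - R i (Xx p)⟫
      + ∑ k, ⟪Xv w k - Xv p k, L k i (Xx w i - Xx p i)⟫ ≤ 0 := by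
    intro i
    have hm := (hA i).1 (hw1 i) (hp1 i)
    have he : (Xx (0 : PiLp 2 (XFam H G)) i + s i - C i (Xx w i) - Q i (Xx w i) - R i (Xx w)
          - ∑ k, ContinuousLinearMap.adjoint (L k i) (Xv w k))
        - (Xx pstar i + s i - Q i (Xx p i) - R i (Xx p)
          - ∑ k, ContinuousLinearMap.adjoint (L k i) (Xv p k))
        = -(Xx pstar i + C i (Xx w i)) - (Q i (Xx w i) - Q i (Xx p i))
          - (R i (Xx w) - R i (Xx p))
          - ∑ k, ContinuousLinearMap.adjoint (L k i) (Xv w k - Xv p k) := by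
      have h0 : Xx (0 : PiLp 2 (XFam H G)) i = 0 := rfl
      rw [h0]
      simp only [map_sub, Finset.sum_sub_distrib]
      abel
    rw [he] at hm
    rw [inner_sub_right, inner_sub_right, inner_sub_right, inner_neg_right, inner_sum] at hm
    have hadj : ∀ k ∈ (Finset.univ : Finset K),
        ⟪Xx w i - Xx p i, ContinuousLinearMap.adjoint (L k i) (Xv w k - Xv p k)⟫
        = ⟪Xv w k - Xv p k, L k i (Xx w i - Xx p i)⟫ := fun k _ => by
      rw [ContinuousLinearMap.adjoint_inner_right]
      exact real_inner_comm _ _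
    rw [Finset.sum_congr rfl hadj] at hm
    linarith
  have key_y : ∀ k, ⟪Xy w k - Xy p k, Xy pstar k + Bc k (Xy w k)⟫
      ≤ ⟪Xy w k - Xy p k, Xv w k - Xv p k⟫ := by
    intro k
    have hm := (hBm k).1 (hw2 k) (hp2 k)
    have he : (Xy (0 : PiLp 2 (XFam H G)) k - Bc k (Xy w k) - Bl k (Xy w k) + Xv w k)
        - (Xy pstar k - Bl k (Xy p k) + Xv p k)
        = -(Xy pstar k + Bc k (Xy w k)) - (Bl k (Xy w k) - Bl k (Xy p k))
          + (Xv w k - Xv p k) := by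
      have h0 : Xy (0 : PiLp 2 (XFam H G)) k = 0 := rfl
      rw [h0]; abel
    rw [he] at hm
    rw [inner_add_right, inner_sub_right, inner_neg_right] at hm
    have hl := hBlm k (Xy w k) (Xy p k)
    linarith
  have key_z : ∀ k, ⟪Xz w k - Xz p k, Xz pstar k + Dc k (Xz w k)⟫
      ≤ ⟪Xz w k - Xz p k, Xv w k - Xv p k⟫ := by
    intro k
    have hm := (hDm k).1 (hw3 k) (hp3 k)
    have he : (Xz (0 : PiLp 2 (XFam H G)) k - Dc k (Xz w k) - Dl k (Xz w k) + Xv w k)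
        - (Xz pstar k - Dl k (Xz p k) + Xv p k)
        = -(Xz pstar k + Dc k (Xz w k)) - (Dl k (Xz w k) - Dl k (Xz p k))
          + (Xv w k - Xv p k) := by
      have h0 : Xz (0 : PiLp 2 (XFam H G)) k = 0 := rfl
      rw [h0]; abel
    rw [he] at hm
    rw [inner_add_right, inner_sub_right, inner_neg_right] at hm
    have hl := hDlm k (Xz w k) (Xz p k)
    linarith
  have key_v : ∀ k, ⟪Xv w k - Xv p k, Xv pstar k + Xv (CopX C Bc Dc w) k⟫
      = -⟪Xv w k - Xv p k, Xy w k - Xy p k⟫ - ⟪Xv w k - Xv p k, Xz w k - Xz p k⟫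
        + ⟪Xv w k - Xv p k, ∑ i, L k i (Xx w i - Xx p i)⟫ := by
    intro k
    have h1 := hw4 k
    have h0 : Xv (0 : PiLp 2 (XFam H G)) k = 0 := rfl
    rw [h0] at h1
    have h1' : r k + Xy w k + Xz w k = ∑ i, L k i (Xx w i) := sub_eq_zero.mp h1.symm
    have he : Xv pstar k + Xv (CopX C Bc Dc w) k
        = -((Xy w k - Xy p k) + (Xz w k - Xz p k) - ∑ i, L k i (Xx w i - Xx p i)) := by
      have hc : Xv (CopX C Bc Dc w) k = 0 := rfl
      rw [hc, hp4 k]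
      simp only [map_sub, Finset.sum_sub_distrib]
      rw [← h1']
      abel
    rw [he, inner_neg_right, inner_sub_right, inner_add_right]
    ring
  -- the main monotonicity inequality
  have ecx : ∀ i, (⟪Xx (w - p) i, Xx (pstar + CopX C Bc Dc w) i⟫ : ℝ)
      = ⟪Xx w i - Xx p i, Xx pstar i + C i (Xx w i)⟫ := fun _ => rfl
  have ecy : ∀ k, (⟪Xy (w - p) k, Xy (pstar + CopX C Bc Dc w) k⟫ : ℝ)
      = ⟪Xy w k - Xy p k, Xy pstar k + Bc k (Xy w k)⟫ := fun _ => rfl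
  have ecz : ∀ k, (⟪Xz (w - p) k, Xz (pstar + CopX C Bc Dc w) k⟫ : ℝ)
      = ⟪Xz w k - Xz p k, Xz pstar k + Dc k (Xz w k)⟫ := fun _ => rfl
  have ecv : ∀ k, (⟪Xv (w - p) k, Xv (pstar + CopX C Bc Dc w) k⟫ : ℝ)
      = ⟪Xv w k - Xv p k, Xv pstar k + Xv (CopX C Bc Dc w) k⟫ := fun _ => rfl
  have key : ⟪w - p, pstar + CopX C Bc Dc w⟫ ≤ 0 := by
    rw [dec]
    simp only [ecx, ecy, ecz, ecv]
    have hsum1 : ∑ i, (⟪Xx w i - Xx p i, Xx pstar i + C i (Xx w i)⟫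
        + ⟪Xx w i - Xx p i, Q i (Xx w i) - Q i (Xx p i)⟫
        + ⟪Xx w i - Xx p i, R i (Xx w) - R i (Xx p)⟫
        + ∑ k, ⟪Xv w k - Xv p k, L k i (Xx w i - Xx p i)⟫) ≤ 0 :=
      Finset.sum_nonpos (fun i _ => key_i i)
    rw [Finset.sum_add_distrib, Finset.sum_add_distrib, Finset.sum_add_distrib] at hsum1
    have hQ : 0 ≤ ∑ i, ⟪Xx w i - Xx p i, Q i (Xx w i) - Q i (Xx p i)⟫ :=
      Finset.sum_nonneg (fun i _ => hQm i (Xx w i) (Xx p i))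
    have hR : 0 ≤ ∑ i, ⟪Xx w i - Xx p i, R i (Xx w) - R i (Xx p)⟫ := by
      have h := hRm (Xx w) (Xx p)
      rw [PiLp.inner_apply] at h
      have e : ∀ i, (⟪(Xx w - Xx p) i,
          ((WithLp.toLp 2 (fun i => R i (Xx w)) : PiLp 2 H) - (WithLp.toLp 2 (fun i => R i (Xx p)) : PiLp 2 H)) i⟫ : ℝ)
          = ⟪Xx w i - Xx p i, R i (Xx w) - R i (Xx p)⟫ := fun _ => rfl
      simpa only [e] using h
    have hcross : ∑ i, ∑ k, ⟪Xv w k - Xv p k, L k i (Xx w i - Xx p i)⟫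
        = ∑ k, ⟪Xv w k - Xv p k, ∑ i, L k i (Xx w i - Xx p i)⟫ := by
      rw [Finset.sum_comm]
      exact Finset.sum_congr rfl (fun k _ => (inner_sum _ _ _).symm)
    have hy : ∑ k, ⟪Xy w k - Xy p k, Xy pstar k + Bc k (Xy w k)⟫
        ≤ ∑ k, ⟪Xy w k - Xy p k, Xv w k - Xv p k⟫ :=
      Finset.sum_le_sum (fun k _ => key_y k)
    have hz2 : ∑ k, ⟪Xz w k - Xz p k, Xz pstar k + Dc k (Xz w k)⟫
        ≤ ∑ k, ⟪Xz w k - Xz p k, Xv w k - Xv p k⟫ :=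
      Finset.sum_le_sum (fun k _ => key_z k)
    have hv : ∑ k, ⟪Xv w k - Xv p k, Xv pstar k + Xv (CopX C Bc Dc w) k⟫
        = -∑ k, ⟪Xv w k - Xv p k, Xy w k - Xy p k⟫
          - ∑ k, ⟪Xv w k - Xv p k, Xz w k - Xz p k⟫
          + ∑ k, ⟪Xv w k - Xv p k, ∑ i, L k i (Xx w i - Xx p i)⟫ := by
      rw [Finset.sum_congr rfl (fun k _ => key_v k), Finset.sum_add_distrib,
        Finset.sum_sub_distrib, Finset.sum_neg_distrib]
    have hyy : ∑ k, ⟪Xy w k - Xy p k, Xv w k - Xv p k⟫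
        = ∑ k, ⟪Xv w k - Xv p k, Xy w k - Xy p k⟫ :=
      Finset.sum_congr rfl (fun k _ => real_inner_comm _ _)
    have hzz : ∑ k, ⟪Xz w k - Xz p k, Xv w k - Xv p k⟫
        = ∑ k, ⟪Xv w k - Xv p k, Xz w k - Xz p k⟫ :=
      Finset.sum_congr rfl (fun k _ => real_inner_comm _ _)
    rw [hcross] at hsum1
    linarith
  -- cocoercivity of the combined operator
  have coco : α * ‖CopX C Bc Dc q - CopX C Bc Dc w‖ ^ 2
      ≤ ⟪q - w, CopX C Bc Dc q - CopX C Bc Dc w⟫ := by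
    rw [dec, decn]
    have e1 : ∀ i, ‖Xx (CopX C Bc Dc q - CopX C Bc Dc w) i‖ ^ 2
        = ‖C i (Xx q i) - C i (Xx w i)‖ ^ 2 := fun _ => rfl
    have e2 : ∀ k, ‖Xy (CopX C Bc Dc q - CopX C Bc Dc w) k‖ ^ 2
        = ‖Bc k (Xy q k) - Bc k (Xy w k)‖ ^ 2 := fun _ => rfl
    have e3 : ∀ k, ‖Xz (CopX C Bc Dc q - CopX C Bc Dc w) k‖ ^ 2
        = ‖Dc k (Xz q k) - Dc k (Xz w k)‖ ^ 2 := fun _ => rfl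
    have e4 : ∀ k, ‖Xv (CopX C Bc Dc q - CopX C Bc Dc w) k‖ ^ 2 = (0 : ℝ) := fun k => by
      show ‖(0 : G k) - 0‖ ^ 2 = (0 : ℝ); simp
    have f1 : ∀ i, (⟪Xx (q - w) i, Xx (CopX C Bc Dc q - CopX C Bc Dc w) i⟫ : ℝ)
        = ⟪Xx q i - Xx w i, C i (Xx q i) - C i (Xx w i)⟫ := fun _ => rfl
    have f2 : ∀ k, (⟪Xy (q - w) k, Xy (CopX C Bc Dc q - CopX C Bc Dc w) k⟫ : ℝ)
        = ⟪Xy q k - Xy w k, Bc k (Xy q k) - Bc k (Xy w k)⟫ := fun _ => rfl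
    have f3 : ∀ k, (⟪Xz (q - w) k, Xz (CopX C Bc Dc q - CopX C Bc Dc w) k⟫ : ℝ)
        = ⟪Xz q k - Xz w k, Dc k (Xz q k) - Dc k (Xz w k)⟫ := fun _ => rfl
    have f4 : ∀ k, (⟪Xv (q - w) k, Xv (CopX C Bc Dc q - CopX C Bc Dc w) k⟫ : ℝ) = 0 :=
      fun k => by
        show (⟪Xv q k - Xv w k, (0 : G k) - 0⟫ : ℝ) = 0
        simp
    simp only [e1, e2, e3, e4, f1, f2, f3, f4, Finset.sum_const_zero, add_zero]
    rw [mul_add, mul_add, Finset.mul_sum, Finset.mul_sum, Finset.mul_sum]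
    refine add_le_add (Finset.sum_le_sum fun i _ => ?_)
      (add_le_add (Finset.sum_le_sum fun k _ => ?_) (Finset.sum_le_sum fun k _ => ?_))
    · exact le_trans (mul_le_mul_of_nonneg_right (hαa i) (sq_nonneg _)) (hC i _ _)
    · exact le_trans (mul_le_mul_of_nonneg_right (hαb k) (sq_nonneg _)) (hBc k _ _)
    · exact le_trans (mul_le_mul_of_nonneg_right (hαd k) (sq_nonneg _)) (hDc k _ _)
  -- final assembly
  have e5 : ⟪w - p, CopX C Bc Dc q - CopX C Bc Dc w⟫
      = ⟪q - p, CopX C Bc Dc q - CopX C Bc Dc w⟫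
        - ⟪q - w, CopX C Bc Dc q - CopX C Bc Dc w⟫ := by
    rw [← inner_sub_left]
    congr 1
    abel
  have e6 : ⟪w - p, pstar + CopX C Bc Dc q⟫
      = ⟪w - p, pstar + CopX C Bc Dc w⟫ + ⟪w - p, CopX C Bc Dc q - CopX C Bc Dc w⟫ := by
    rw [inner_sub_right, inner_add_right, inner_add_right]
    ring
  have hb : ⟪q - p, CopX C Bc Dc q - CopX C Bc Dc w⟫
      ≤ ‖p - q‖ * ‖CopX C Bc Dc q - CopX C Bc Dc w‖ := by
    have h := real_inner_le_norm (q - p) (CopX C Bc Dc q - CopX C Bc Dc w)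
    rwa [norm_sub_rev q p] at h
  set t := ‖CopX C Bc Dc q - CopX C Bc Dc w‖ with ht
  have hfin : ‖p - q‖ * t - α * t ^ 2 ≤ (4 * α)⁻¹ * ‖p - q‖ ^ 2 := by
    rw [inv_mul_eq_div, le_div_iff₀ (by linarith)]
    nlinarith [sq_nonneg (‖p - q‖ - 2 * α * t)]
  rw [e6, e5]
  linarith

end
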